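/- For real numbers, √(2 − 2/3^(1/3) + 8/3^(1/6) + 5·3^(1/3)) = 1 + 3^(−1/6) − 3^(1/6) + 3^(1/3) + √3. -/

import Mathlib

theorem nested_radical_three_sixth_roots :
    Real.sqrt (2 - 2 / (3:ℝ) ^ ((1:ℝ)/3) + 8 / (3:ℝ) ^ ((1:ℝ)/6) + 5 * (3:ℝ) ^ ((1:ℝ)/3))
      = 1 + (3:ℝ) ^ (-(1:ℝ)/6) - (3:ℝ) ^ ((1:ℝ)/6) + (3:ℝ) ^ ((1:ℝ)/3) + Real.sqrt 3 := by
  set t : ℝ := (3:ℝ) ^ ((1:ℝ)/6) with ht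
  have ht0 : 0 < t := Real.rpow_pos_of_pos (by norm_num) _
  have ht6 : t ^ 6 = 3 := by
    rw [ht, ← Real.rpow_natCast ((3:ℝ) ^ ((1:ℝ)/6)) 6, ← Real.rpow_mul (by norm_num)]
    norm_num
  have ht1 : 1 < t := by
    by_contra h
    push_neg at h
    have h2 : t ^ 6 ≤ 1 := pow_le_one₀ (le_of_lt ht0) h
    rw [ht6] at h2; linarith
  have h3 : (3:ℝ) ^ ((1:ℝ)/3) = t ^ 2 := by
    rw [ht, ← Real.rpow_natCast ((3:ℝ) ^ ((1:ℝ)/6)) 2, ← Real.rpow_mul (by norm_num)]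
    norm_num
  have hneg : (3:ℝ) ^ (-(1:ℝ)/6) = t⁻¹ := by
    rw [ht, ← Real.rpow_neg_one, ← Real.rpow_mul (by norm_num)]
    norm_num
  have hs3 : Real.sqrt 3 = t ^ 3 := by
    rw [show (3:ℝ) = (t^3)^2 by rw [← ht6]; ring]
    exact Real.sqrt_sq (by positivity)
  rw [h3, hneg, hs3]
  have harg : 2 - 2 / t ^ 2 + 8 / t + 5 * t ^ 2
      = (1 + t⁻¹ - t + t ^ 2 + t ^ 3) ^ 2 := by
    field_simp
    linear_combination (1 - 2*t - t^2) * ht6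
  rw [harg, Real.sqrt_sq (by nlinarith [inv_pos.mpr ht0, sq_nonneg (2*t-1), pow_pos ht0 3])]
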